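/- arXiv:2012.01025 — 4 statements merged into one kernel-verified Lean document; each statement's English description precedes it below -/
import Mathlib

section
/- A rule φ satisfies recursive dominance if and only if φ is strategy-proof. In particular, if φ is strategy-proof, then for every agent a, preference P_a, profile P_{-a} of preferences of the other agents, subset I ⊆ O, enumeration γ of I, and any preference P* whose top |I| objects are exactly γ in that order, we have φ_a(γ ⊕ P_a|_{O∖I}, P_{-a}) is weakly preferred by P_a to φ_a(P*, P_{-a}). -/
variable {A O : Type*}

/-- A rule is strategy-proof: truthful reporting yields a weakly preferred
assignment. (Larger in the linear order means more preferred.) -/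
def StrategyProof [DecidableEq A] (φ : (A → LinearOrder O) → A → O) : Prop :=
  ∀ (P : A → LinearOrder O) (a : A) (Q : LinearOrder O),
    (P a).le (φ (Function.update P a Q) a) (φ P a)

/-- `s` is a top initial segment of the preference `L`: every object in `s`
is strictly preferred to every object outside `s`. -/
def IsTopSegment (L : LinearOrder O) (s : Finset O) : Prop :=
  ∀ o ∈ s, ∀ o' ∉ s, L.lt o' o

/-- Two preferences rank the objects of `s` in the same relative order. -/
def AgreeOn (L L' : LinearOrder O) (s : Finset O) : Prop :=
  ∀ o ∈ s, ∀ o' ∈ s, (L.lt o o' ↔ L'.lt o o')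

/-- Two preferences rank the objects outside `s` in the same relative order. -/
def AgreeOutside (L L' : LinearOrder O) (s : Finset O) : Prop :=
  ∀ o ∉ s, ∀ o' ∉ s, (L.lt o o' ↔ L'.lt o o')

/-- Recursive dominance: for every agent `a`, true preference `P a`, set `s ⊆ O`
with an enumeration `γ` of `s` (encoded by requiring `Q` and `Qstar` to both have
`s` as a top segment ranked in the same order `γ`), letting `Q = γ ⊕ P a |_{O∖s}`
(top segment `γ`, remainder ordered as `P a`) and `Qstar ∈ ℙ|_γ` arbitrary,
`φ_a(Q, P_{-a})` is weakly preferred under `P a` to `φ_a(Qstar, P_{-a})`. -/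
def RecursiveDominance [DecidableEq A] (φ : (A → LinearOrder O) → A → O) : Prop :=
  ∀ (P : A → LinearOrder O) (a : A) (s : Finset O) (Q Qstar : LinearOrder O),
    IsTopSegment Q s → IsTopSegment Qstar s → AgreeOn Q Qstar s →
    AgreeOutside Q (P a) s →
    (P a).le (φ (Function.update P a Qstar) a) (φ (Function.update P a Q) a)

/-- A rule satisfies recursive dominance if and only if it is strategy-proof. -/
theorem recursiveDominance_iff_strategyProof [Finite A] [Finite O] [DecidableEq A]
    (φ : (A → LinearOrder O) → A → O) :
    RecursiveDominance φ ↔ StrategyProof φ := by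
  constructor
  · intro h P a Q
    have := h P a ∅ (P a) Q (by intro o ho; simp at ho) (by intro o ho; simp at ho)
      (by intro o ho; simp at ho) (by intro o _ o' _; rfl)
    rwa [Function.update_eq_self] at this
  · intro h P a s Q Qstar hQ hQs hon hout
    set x := φ (Function.update P a Qstar) a with hx
    set y := φ (Function.update P a Q) a with hy
    have h1 : Q.le x y := by
      have := h (Function.update P a Q) a Qstar
      rw [Function.update_idem, Function.update_self] at this
      exact this
    have h2 : Qstar.le y x := by
      have := h (Function.update P a Qstar) a Q
      rw [Function.update_idem, Function.update_self] at this
      exact this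
    rcases eq_or_ne x y with heq | hne
    · exact heq ▸ (P a).le_refl x
    have hq : Q.lt x y := (Q.lt_iff_le_not_ge x y).2
      ⟨h1, fun hle => hne (Q.le_antisymm x y h1 hle)⟩
    have hqs : Qstar.lt y x := (Qstar.lt_iff_le_not_ge y x).2
      ⟨h2, fun hle => hne (Q.le_antisymm x y h1 ((Qstar.le_antisymm y x h2 hle) ▸ Q.le_refl x) )⟩
    -- case analysis on membership
    by_cases hxs : x ∈ s
    · by_cases hys : y ∈ s
      · exact absurd ((hon x hxs y hys).1 hq) fun h' =>
          ((Qstar.lt_iff_le_not_ge x y).1 h').2 ((Qstar.lt_iff_le_not_ge y x).1 hqs).1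
      · exact absurd (hQ x hxs y hys) fun h' =>
          ((Q.lt_iff_le_not_ge y x).1 h').2 ((Q.lt_iff_le_not_ge x y).1 hq).1
    · by_cases hys : y ∈ s
      · exact absurd (hQs y hys x hxs) fun h' =>
          ((Qstar.lt_iff_le_not_ge x y).1 h').2 ((Qstar.lt_iff_le_not_ge y x).1 hqs).1
      · exact ((P a).lt_iff_le_not_ge x y).1 ((hout x hxs y hys).1 hq) |>.1
end

section
/- Let O = {o1, o2, o3, ∅} and consider a single agent a. Define the rule φ* by: φ*(P) = o1 if o1 P o2 and o2 P o3 (i.e., preference order is o1, o2, o3 at the top); φ*(P) = o3 if o1 P o3 and o3 P o2 with o1 top; and φ*(P) = ∅ otherwise. Then φ* does not satisfy monotonic discoverability. -/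
open Classical

/-- `P'` is a continuation profile of `P` at allocation `μ` (i.e. `P' ∈ L(P, μ)`). -/
def InLowerContour {A O : Type*} (P : A → LinearOrder O) (μ : A → O)
    (P' : A → LinearOrder O) : Prop :=
  ∀ a : A, ∀ o o' : O, (P a).le (μ a) o → ((P a).lt o' o ↔ (P' a).lt o' o)

/-- A rule `φ` satisfies monotonic discoverability: for every allocation `μ`
and profile `P`, either `φ P = μ` or some agent `a*` is not assigned `μ a*`
under any continuation profile of `P` at `μ`. -/
def MonotonicDiscoverability {A O : Type*} (φ : (A → LinearOrder O) → A → O) : Prop :=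
  ∀ (μ : A → O) (P : A → LinearOrder O),
    φ P = μ ∨ ∃ a : A, ∀ P' : A → LinearOrder O, InLowerContour P μ P' → φ P' a ≠ μ a

/-- Objects: `0 = o1`, `1 = o2`, `2 = o3`, `3 = ∅` (the null object).
Single agent (`PUnit`).  Larger in the linear order means more preferred.
`φ* P = o1` if the top three objects of `P` in order are `o1, o2, o3`;
`φ* P = o3` if they are `o1, o3, o2`; otherwise `φ* P = ∅`. -/
noncomputable def phiStar (P : PUnit → LinearOrder (Fin 4)) : PUnit → Fin 4 := fun _ =>
  if (P PUnit.unit).lt 1 0 ∧ (P PUnit.unit).lt 2 1 ∧ (P PUnit.unit).lt 3 2 then 0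
  else if (P PUnit.unit).lt 2 0 ∧ (P PUnit.unit).lt 1 2 ∧ (P PUnit.unit).lt 3 1 then 2
  else 3

def f1 : Fin 4 → Fin 4 := ![3,1,2,0]
def f2 : Fin 4 → Fin 4 := ![3,2,1,0]

def Pord : LinearOrder (Fin 4) := LinearOrder.lift' f1 (by decide)
def Qord : LinearOrder (Fin 4) := LinearOrder.lift' f2 (by decide)

lemma Plt (a b : Fin 4) : Pord.lt a b ↔ f1 a < f1 b := Iff.rfl
lemma Ple (a b : Fin 4) : Pord.le a b ↔ f1 a ≤ f1 b := Iff.rfl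
lemma Qlt (a b : Fin 4) : Qord.lt a b ↔ f2 a < f2 b := Iff.rfl

lemma key : ∀ o o' : Fin 4, f1 0 ≤ f1 o → (f1 o' < f1 o ↔ f2 o' < f2 o) := by decide

lemma valP : phiStar (fun _ => Pord) PUnit.unit = 2 := by
  simp only [phiStar, Plt]; decide

lemma valQ (a : PUnit) : phiStar (fun _ => Qord) a = 0 := by
  simp only [phiStar, Qlt]; decide

/-- The rule `φ*` does not satisfy monotonic discoverability. -/
theorem phiStar_not_monotonicDiscoverability : ¬ MonotonicDiscoverability phiStar := by
  intro h
  rcases h (fun _ => 0) (fun _ => Pord) with h1 | ⟨a, h2⟩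
  · have := congrFun h1 PUnit.unit
    rw [valP] at this
    exact absurd this (by decide)
  · exact h2 (fun _ => Qord)
      (fun a o o' hle => key o o' ((Ple 0 o).mp hle))
      (valQ a)
end

section
/- The serial dictatorship rule is resource monotonic: if an agent a* changes her preference from P_{a*} to P'_{a*} and under the new profile SD assigns a* the null object, then every other agent receives a weakly preferred assignment under the new profile compared to the original profile. -/
variable {O : Type*} [Fintype O] [DecidableEq O]

/-- Available objects when it is agent `k`'s turn in the serial dictatorship with
priority order `a_0, a_1, …`: each agent in turn takes her most-preferred available
object; the null object is never removed (it has unlimited copies).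
(Larger in the linear order means more preferred.) -/
def availSD (nullObj : O) {n : ℕ} (P : Fin n → LinearOrder O) :
    ℕ → {s : Finset O // s.Nonempty}
  | 0 => ⟨Finset.univ, ⟨nullObj, Finset.mem_univ _⟩⟩
  | k + 1 =>
    let s := availSD nullObj P k
    if h : k < n then
      ⟨insert nullObj (s.1.erase (@Finset.max' O (P ⟨k, h⟩) s.1 s.2)),
        Finset.insert_nonempty _ _⟩
    else s

/-- The serial dictatorship rule: agent `a` receives her most-preferred object
among those still available at her turn. -/
def SD (nullObj : O) {n : ℕ} (P : Fin n → LinearOrder O) (a : Fin n) : O :=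
  @Finset.max' O (P a) (availSD nullObj P a.1).1 (availSD nullObj P a.1).2

lemma step_subset (L : LinearOrder O) (nullObj : O) {s t : Finset O}
    (hs : s.Nonempty) (ht : t.Nonempty) (hst : s ⊆ t) :
    insert nullObj (s.erase (@Finset.max' O L s hs))
      ⊆ insert nullObj (t.erase (@Finset.max' O L t ht)) := by
  letI := L
  intro x hx
  rcases Finset.mem_insert.mp hx with rfl | hx
  · exact Finset.mem_insert_self _ _
  · obtain ⟨hne, hxs⟩ := Finset.mem_erase.mp hx
    refine Finset.mem_insert.mpr (Or.inr (Finset.mem_erase.mpr ⟨?_, hst hxs⟩))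
    rintro rfl
    have h1 : s.max' hs ≤ t.max' ht := Finset.max'_subset hs hst
    have h2 : t.max' ht ≤ s.max' hs := Finset.le_max' s _ hxs
    exact hne (le_antisymm h2 h1)


lemma max'_congr {L L' : LinearOrder O} {s t : Finset O} (hL : L = L') (hst : s = t)
    (hs : s.Nonempty) (ht : t.Nonempty) :
    @Finset.max' O L s hs = @Finset.max' O L' t ht := by
  subst hL; subst hst; rfl

lemma null_mem_availSD (nullObj : O) {n : ℕ} (P : Fin n → LinearOrder O) :
    ∀ k, nullObj ∈ (availSD nullObj P k).1 := by
  intro k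
  induction k with
  | zero => simp [availSD]
  | succ k ih =>
    rw [availSD]
    split
    · exact Finset.mem_insert_self _ _
    · exact ih

lemma availSD_update_eq (nullObj : O) {n : ℕ} (P : Fin n → LinearOrder O)
    (astar : Fin n) (Q : LinearOrder O) :
    ∀ k, k ≤ astar.1 →
      availSD nullObj (Function.update P astar Q) k = availSD nullObj P k := by
  intro k
  induction k with
  | zero => intro _; rfl
  | succ k ih =>
    intro hk
    have hk' : k ≤ astar.1 := Nat.le_of_succ_le hk
    rw [availSD, availSD]
    simp only [ih hk']
    split
    next hkn =>
      have hne : (⟨k, hkn⟩ : Fin n) ≠ astar := by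
        intro he
        have : k = astar.1 := congrArg Fin.val he
        omega
      exact Subtype.ext (by
        dsimp only
        rw [max'_congr (Function.update_of_ne hne Q P) rfl
          (availSD nullObj P k).2 (availSD nullObj P k).2])
    next => rfl

lemma availSD_subset (nullObj : O) {n : ℕ} (P : Fin n → LinearOrder O)
    (astar : Fin n) (Q : LinearOrder O)
    (h : SD nullObj (Function.update P astar Q) astar = nullObj) :
    ∀ k, astar.1 < k →
      (availSD nullObj P k).1 ⊆ (availSD nullObj (Function.update P astar Q) k).1 := by
  intro k
  induction k with
  | zero => omega
  | succ k ih =>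
    intro hk
    rcases Nat.lt_or_ge astar.1 k with hlt | hge
    · have hsub := ih hlt
      rw [availSD, availSD]
      split
      next hkn =>
        have hne : (⟨k, hkn⟩ : Fin n) ≠ astar := by
          intro he
          have : k = astar.1 := congrArg Fin.val he
          omega
        dsimp only
        rw [max'_congr (Function.update_of_ne hne Q P) rfl
          (availSD nullObj (Function.update P astar Q) k).2
          (availSD nullObj (Function.update P astar Q) k).2]
        exact step_subset _ nullObj _ _ hsub
      next => exact hsub
    · have hk' : k = astar.1 := le_antisymm hge (Nat.lt_succ_iff.mp hk)
      subst hk'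
      have hkn : astar.1 < n := astar.2
      have heq := availSD_update_eq nullObj P astar Q astar.1 (le_refl _)
      rw [availSD, availSD, dif_pos hkn, dif_pos hkn]
      dsimp only
      simp only [heq]
      rw [SD] at h
      have hmax : @Finset.max' O (Function.update P astar Q ⟨astar.1, hkn⟩)
          (availSD nullObj P astar.1).1 (availSD nullObj P astar.1).2 = nullObj := by
        refine Eq.trans (max'_congr ?_ ?_ _ _) h
        · exact congrArg (Function.update P astar Q) (Fin.ext rfl)
        · rw [heq]
      rw [hmax]
      rw [Finset.insert_erase (null_mem_availSD nullObj P astar.1)]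
      exact Finset.insert_subset (null_mem_availSD nullObj P astar.1)
        (Finset.erase_subset _ _)

/-- Serial dictatorship is resource monotonic: if agent `a*` changes her
preference from `P a*` to `Q` and is assigned the null object under the new
profile, then every other agent receives a weakly preferred assignment under
the new profile. -/
theorem sd_resourceMonotonic (nullObj : O) {n : ℕ} (P : Fin n → LinearOrder O)
    (astar : Fin n) (Q : LinearOrder O)
    (h : SD nullObj (Function.update P astar Q) astar = nullObj) :
    ∀ a : Fin n, a ≠ astar →
      (P a).le (SD nullObj P a) (SD nullObj (Function.update P astar Q) a) := by
  intro a ha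
  letI := P a
  rcases lt_trichotomy a.1 astar.1 with hlt | heq | hgt
  · have heq' := availSD_update_eq nullObj P astar Q a.1 (le_of_lt hlt)
    rw [SD, SD]
    rw [max'_congr (Function.update_of_ne ha Q P) (by rw [heq'])
      (availSD nullObj (Function.update P astar Q) a.1).2
      (availSD nullObj P a.1).2]
  · exact absurd (Fin.ext heq) ha
  · have hsub := availSD_subset nullObj P astar Q h a.1 hgt
    rw [SD, SD]
    rw [max'_congr (Function.update_of_ne ha Q P) rfl
      (availSD nullObj (Function.update P astar Q) a.1).2
      (availSD nullObj (Function.update P astar Q) a.1).2]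
    exact Finset.max'_subset _ hsub
end

section
/- If a rule φ is strategy-proof, then for every agent a, preference profile P, and subset I of objects forming a top initial segment of P_a (i.e., I is the set of the k most-preferred objects under P_a for some k), modifying P_a by arbitrarily reordering the objects in O∖I below I does not change agent a's assignment when a's original assignment lies in I. -/
variable {A O : Type*}

/-- If `φ` is strategy-proof, `P a` and `Q` agree on a common top segment `s`
(same set, ranked in the same order, at the top of both), and `a`'s assignment
under `P` lies in `s`, then reporting `Q` instead of `P a` (reordering the
objects below `s` arbitrarily) does not change `a`'s assignment. -/
theorem strategyProof_top_segment_invariance [Finite A] [Finite O] [DecidableEq A]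
    (φ : (A → LinearOrder O) → A → O) (hSP : StrategyProof φ)
    (P : A → LinearOrder O) (a : A) (Q : LinearOrder O) (s : Finset O)
    (h1 : IsTopSegment (P a) s) (h2 : IsTopSegment Q s)
    (h3 : AgreeOn (P a) Q s) (h4 : φ P a ∈ s) :
    φ (Function.update P a Q) a = φ P a := by
  set P' := Function.update P a Q with hP'
  have hP'a : P' a = Q := Function.update_self a Q P
  have hy_le_x : (P a).le (φ P' a) (φ P a) := hSP P a Q
  have hback : Function.update P' a (P a) = P := by
    rw [hP', Function.update_idem, Function.update_eq_self]
  have hx_le_y : Q.le (φ P a) (φ P' a) := by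
    have := hSP P' a (P a)
    rwa [hP'a, hback] at this
  have hy_mem : φ P' a ∈ s := by
    by_contra hns
    exact absurd (h2 _ h4 _ hns) ((@not_lt O Q _ _).2 hx_le_y)
  have h₁ : ¬ Q.lt (φ P' a) (φ P a) := (@not_lt O Q _ _).2 hx_le_y
  have h₂ : ¬ (P a).lt (φ P' a) (φ P a) := fun h => h₁ ((h3 _ hy_mem _ h4).1 h)
  exact (P a).le_antisymm _ _ hy_le_x ((@not_lt O (P a) _ _).1 h₂)
end
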